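/- arXiv:2209.13199 — 3 statements merged into one kernel-verified Lean document; each statement's English description precedes it below -/
import Mathlib

section
/- Let K be a field, R = K[s,t], and n ≥ 3. Define ψ : R^{n-1} → R by ψ(v) = Σ_{i=1}^{n-1} s^{n-1-i} t^{i-1} v_i, and K : R^{n-2} → R^{n-1} by sending the standard basis vector e_i to t·e_i − s·e_{i+1}. Then the sequence 0 → R^{n-2} →K R^{n-1} →ψ R is exact: K is injective and the image of K equals the kernel of ψ. -/
open MvPolynomial

/-- The map `ψ : R^{n-1} → R`, `v ↦ Σ_{i=1}^{n-1} s^{n-1-i} t^{i-1} v_i`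
(in 0-indexed form, entry `i` is `s^{n-2-i} t^i`), where `R = K[s,t]`. -/
noncomputable def stmt1Psi (K : Type*) [Field K] (n : ℕ)
    (v : Fin (n - 1) → MvPolynomial (Fin 2) K) : MvPolynomial (Fin 2) K :=
  ∑ i : Fin (n - 1), (X 0) ^ (n - 2 - (i : ℕ)) * (X 1) ^ (i : ℕ) * v i

/-- The map `K : R^{n-2} → R^{n-1}` sending `e_i ↦ t·e_i − s·e_{i+1}`. -/
noncomputable def stmt1K (K : Type*) [Field K] (n : ℕ)
    (w : Fin (n - 2) → MvPolynomial (Fin 2) K) : Fin (n - 1) → MvPolynomial (Fin 2) K :=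
  fun j =>
    (X 1) * (if h : (j : ℕ) < n - 2 then w ⟨j, h⟩ else 0)
      - (X 0) * (if h : 1 ≤ (j : ℕ) then w ⟨(j : ℕ) - 1, by have := j.2; omega⟩ else 0)

section Aux

variable {K : Type*} [Field K]

lemma aux_prime_X0 : Prime (X 0 : MvPolynomial (Fin 2) K) := by
  rw [← MulEquiv.prime_iff (MvPolynomial.finSuccEquiv K 1).toMulEquiv]
  have : (MvPolynomial.finSuccEquiv K 1).toMulEquiv (X 0 : MvPolynomial (Fin 2) K)
      = Polynomial.X := MvPolynomial.finSuccEquiv_X_zero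
  rw [this]
  exact Polynomial.prime_X

lemma aux_prime_X1 : Prime (X 1 : MvPolynomial (Fin 2) K) := by
  rw [← MulEquiv.prime_iff (MvPolynomial.renameEquiv K (Equiv.swap (0 : Fin 2) 1)).toMulEquiv]
  have : (MvPolynomial.renameEquiv K (Equiv.swap (0 : Fin 2) 1)).toMulEquiv
      (X 1 : MvPolynomial (Fin 2) K) = X 0 := by
    show rename _ (X 1 : MvPolynomial (Fin 2) K) = X 0
    rw [rename_X, Equiv.swap_apply_right]
  rw [this]
  exact aux_prime_X0

lemma aux_not_dvd : ¬ (X 1 : MvPolynomial (Fin 2) K) ∣ X 0 := by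
  intro h
  have h2 := map_dvd (eval (fun i : Fin 2 => if i = 1 then (0 : K) else 1)) h
  simp at h2

/-- If `s^a ∣ p` and `t^b ∣ p` then `s^a * t^b ∣ p`. -/
lemma aux_pow_mul_pow_dvd {a b : ℕ} {p : MvPolynomial (Fin 2) K}
    (h0 : (X 0 : MvPolynomial (Fin 2) K) ^ a ∣ p)
    (h1 : (X 1 : MvPolynomial (Fin 2) K) ^ b ∣ p) :
    (X 0 : MvPolynomial (Fin 2) K) ^ a * (X 1) ^ b ∣ p := by
  obtain ⟨q, rfl⟩ := h0
  refine mul_dvd_mul_left _ (aux_prime_X1.pow_dvd_of_dvd_mul_left b ?_ h1)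
  intro hd
  exact aux_not_dvd (aux_prime_X1.dvd_of_dvd_pow hd)

end Aux

/-- `0 → R^{n-2} → R^{n-1} → R` is exact: `K` is injective and
`im K = ker ψ`. -/
theorem stmt_1 (K : Type*) [Field K] (n : ℕ) (hn : 3 ≤ n) :
    Function.Injective (stmt1K K n) ∧
      ∀ v : Fin (n - 1) → MvPolynomial (Fin 2) K,
        stmt1Psi K n v = 0 ↔ v ∈ Set.range (stmt1K K n) := by
  obtain ⟨m, rfl⟩ : ∃ m, n = m + 3 := ⟨n - 3, by omega⟩
  clear hn
  set s : MvPolynomial (Fin 2) K := X 0 with hs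
  set t : MvPolynomial (Fin 2) K := X 1 with ht
  have hs0 : s ≠ 0 := X_ne_zero _
  have ht0 : t ≠ 0 := X_ne_zero _
  constructor
  · -- injectivity
    intro w w' h
    have key : ∀ k : ℕ, (hk : k < m + 1) → w ⟨k, hk⟩ = w' ⟨k, hk⟩ := by
      intro k
      induction k with
      | zero =>
        intro hk
        have h0 := congrFun h ⟨0, by omega⟩
        simp only [stmt1K] at h0
        rw [dif_pos (show ((⟨0, by omega⟩ : Fin (m + 2)) : ℕ) < m + 3 - 2 by simp),
          dif_neg (by simp), dif_pos (show ((⟨0, by omega⟩ : Fin (m + 2)) : ℕ) < m + 3 - 2 by simp),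
          dif_neg (by simp)] at h0
        have h1 : t * w ⟨0, hk⟩ = t * w' ⟨0, hk⟩ := by
          have := sub_left_inj.mp h0
          exact this
        exact mul_left_cancel₀ ht0 h1
      | succ k ih =>
        intro hk
        have hk' : k < m + 1 := by omega
        have h0 := congrFun h ⟨k + 1, by omega⟩
        simp only [stmt1K] at h0
        rw [dif_pos (show ((⟨k + 1, by omega⟩ : Fin (m + 2)) : ℕ) < m + 3 - 2 from hk),
          dif_pos (show 1 ≤ ((⟨k + 1, by omega⟩ : Fin (m + 2)) : ℕ) by simp),
          dif_pos (show ((⟨k + 1, by omega⟩ : Fin (m + 2)) : ℕ) < m + 3 - 2 from hk),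
          dif_pos (show 1 ≤ ((⟨k + 1, by omega⟩ : Fin (m + 2)) : ℕ) by simp)] at h0
        have hih : w ⟨k, hk'⟩ = w' ⟨k, hk'⟩ := ih hk'
        rw [show (⟨k + 1 - 1, by omega⟩ : Fin (m + 1)) = ⟨k, hk'⟩ from rfl, hih] at h0
        have h1 : t * w ⟨k + 1, hk⟩ = t * w' ⟨k + 1, hk⟩ := sub_left_inj.mp h0
        exact mul_left_cancel₀ ht0 h1
    funext j
    exact key j.1 j.2
  · intro v
    constructor
    · -- the hard direction: ker ψ ⊆ im K
      intro hv
      -- `Tn i` is the `i`-th term of `ψ v`, extended by `0` to all of `ℕ`.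
      set Tn : ℕ → MvPolynomial (Fin 2) K :=
        fun i => if h : i < m + 2 then s ^ (m + 1 - i) * t ^ i * v ⟨i, h⟩ else 0 with hTn
      have hsum : ∑ i ∈ Finset.range (m + 2), Tn i = 0 := by
        rw [← Fin.sum_univ_eq_sum_range, ← hv]
        refine Finset.sum_congr rfl fun i _ => ?_
        simp only [hTn]
        rw [dif_pos i.2]
        rfl
      set S : ℕ → MvPolynomial (Fin 2) K := fun j => ∑ i ∈ Finset.range (j + 1), Tn i with hS
      -- divisibility of partial sums
      have hdvd_s : ∀ j, j ≤ m → s ^ (m + 1 - j) ∣ S j := by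
        intro j hj
        refine Finset.dvd_sum fun i hi => ?_
        rw [Finset.mem_range] at hi
        simp only [hTn]
        rw [dif_pos (by omega)]
        exact ((pow_dvd_pow s (by omega : m + 1 - j ≤ m + 1 - i)).mul_right _).mul_right _
      have hdvd_t : ∀ j, j ≤ m → t ^ (j + 1) ∣ S j := by
        intro j hj
        have hsplit : S j + ∑ i ∈ Finset.Ico (j + 1) (m + 2), Tn i = 0 := by
          simp only [hS]
          rw [Finset.range_eq_Ico, Finset.sum_Ico_consecutive _ (by omega) (by omega)]
          rw [Finset.range_eq_Ico] at hsum
          exact hsum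
        have : S j = -∑ i ∈ Finset.Ico (j + 1) (m + 2), Tn i :=
          eq_neg_of_add_eq_zero_left hsplit
        rw [this]
        refine dvd_neg.mpr (Finset.dvd_sum fun i hi => ?_)
        rw [Finset.mem_Ico] at hi
        simp only [hTn]; rw [dif_pos (by omega)]
        exact ((pow_dvd_pow t (by omega : j + 1 ≤ i)).mul_left _).mul_right _
      have hc : ∀ j : Fin (m + 1), ∃ q, S j.1 = s ^ (m + 1 - j.1) * t ^ (j.1 + 1) * q := by
        intro j
        have := aux_pow_mul_pow_dvd (hdvd_s j.1 (by omega)) (hdvd_t j.1 (by omega))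
        exact this
      choose w hw using hc
      have hw' : ∀ k : ℕ, (hk : k < m + 1) →
          S k = s ^ (m + 1 - k) * t ^ (k + 1) * w ⟨k, hk⟩ := fun k hk => hw ⟨k, hk⟩
      refine ⟨w, ?_⟩
      funext j
      obtain ⟨j, hj⟩ := j
      simp only [stmt1K]
      rcases Nat.eq_zero_or_pos j with rfl | hj1
      · -- j = 0
        rw [dif_pos (show 0 < m + 3 - 2 by omega), dif_neg (by simp)]
        have h1 := hw' 0 (by omega)
        simp only [Nat.sub_zero, zero_add, pow_one] at h1
        have h2 : S 0 = s ^ (m + 1) * v ⟨0, hj⟩ := by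
          simp only [hS]
          simp [hTn]
        rw [h2] at h1
        have h3 : s ^ (m + 1) * (t * w ⟨0, by omega⟩) = s ^ (m + 1) * v ⟨0, hj⟩ := by
          rw [h1]; ring
        have h4 := mul_left_cancel₀ (pow_ne_zero _ hs0) h3
        rw [mul_zero, sub_zero]
        exact h4
      · rcases Nat.lt_or_ge j (m + 1) with hjm | hjm
        · -- 1 ≤ j ≤ m
          obtain ⟨k, rfl⟩ : ∃ k, j = k + 1 := ⟨j - 1, by omega⟩
          rw [dif_pos (show k + 1 < m + 3 - 2 from hjm), dif_pos (by omega)]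
          have h1 := hw' (k + 1) hjm
          have h2 := hw' k (by omega)
          have hstep : S (k + 1) = S k + Tn (k + 1) := by
            simp only [hS]; rw [Finset.sum_range_succ]
          simp only [hTn] at hstep
          rw [dif_pos (by omega : k + 1 < m + 2)] at hstep
          rw [show m + 1 - (k + 1) = m - k by omega] at h1
          rw [show m + 1 - k = (m - k) + 1 by omega] at h2
          rw [h1, h2, show m + 1 - (k + 1) = m - k by omega] at hstep
          -- hstep : s^(m-k) * t^(k+2) * w_{k+1} = s^(m-k+1) * t^(k+1) * w_k + s^(m-k) * t^(k+1) * v_{k+1}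
          have key : s ^ (m - k) * t ^ (k + 1) *
              (t * w ⟨k + 1, hjm⟩ - s * w ⟨k + 1 - 1, by omega⟩) =
              s ^ (m - k) * t ^ (k + 1) * v ⟨k + 1, hj⟩ := by
            rw [show (⟨k + 1 - 1, by omega⟩ : Fin (m + 1)) = ⟨k, by omega⟩ from rfl]
            linear_combination hstep
          exact mul_left_cancel₀
            (mul_ne_zero (pow_ne_zero _ hs0) (pow_ne_zero _ ht0)) key
        · -- j = m + 1
          have hjeq : j = m + 1 := by omega
          subst hjeq
          rw [dif_neg (by omega), dif_pos (by omega)]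
          have h2 := hw' m (by omega)
          rw [show m + 1 - m = 1 by omega, pow_one] at h2
          have hlast : S m + Tn (m + 1) = 0 := by
            simp only [hS]; rw [← Finset.sum_range_succ]
            exact hsum
          simp only [hTn] at hlast
          rw [dif_pos (by omega : m + 1 < m + 2),
            show m + 1 - (m + 1) = 0 by omega, pow_zero, one_mul, h2] at hlast
          -- hlast : s * t^(m+1) * w_m + t^(m+1) * v_{m+1} = 0
          have key : t ^ (m + 1) * (t * 0 - s * w ⟨m + 1 - 1, by omega⟩) =
              t ^ (m + 1) * v ⟨m + 1, hj⟩ := by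
            rw [show (⟨m + 1 - 1, by omega⟩ : Fin (m + 1)) = ⟨m, by omega⟩ from rfl]
            linear_combination -hlast
          exact mul_left_cancel₀ (pow_ne_zero _ ht0) key
    · -- easy direction: ψ ∘ K = 0
      rintro ⟨w, rfl⟩
      -- telescoping
      set F : ℕ → MvPolynomial (Fin 2) K :=
        fun j => if h : 1 ≤ j ∧ j ≤ m + 1 then s ^ (m + 2 - j) * t ^ j * w ⟨j - 1, by omega⟩
          else 0 with hF
      have hterm : ∀ i : Fin (m + 2),
          (X 0 : MvPolynomial (Fin 2) K) ^ (m + 3 - 2 - (i : ℕ)) * (X 1) ^ (i : ℕ) *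
            stmt1K K (m + 3) w i = F ((i : ℕ) + 1) - F (i : ℕ) := by
        intro i
        obtain ⟨j, hj⟩ := i
        simp only [stmt1K, hF]
        rcases Nat.eq_zero_or_pos j with rfl | hj1
        · rw [dif_pos (show 0 < m + 3 - 2 by omega), dif_neg (by simp),
            dif_pos (show 1 ≤ 0 + 1 ∧ 0 + 1 ≤ m + 1 by omega), dif_neg (by omega)]
          rw [show m + 2 - (0 + 1) = m + 3 - 2 - 0 by omega]
          ring
        · rcases Nat.lt_or_ge j (m + 1) with hjm | hjm
          · rw [dif_pos (show j < m + 3 - 2 from hjm), dif_pos (show 1 ≤ j from hj1),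
              dif_pos (show 1 ≤ j + 1 ∧ j + 1 ≤ m + 1 by omega),
              dif_pos (show 1 ≤ j ∧ j ≤ m + 1 by omega)]
            simp only [Nat.add_sub_cancel]
            rw [show m + 2 - (j + 1) = m + 3 - 2 - j by omega,
              show m + 2 - j = (m + 3 - 2 - j) + 1 by omega,
              show (⟨j, hjm⟩ : Fin (m + 1)) = ⟨j, by omega⟩ from rfl]
            ring
          · have hjeq : j = m + 1 := by omega
            subst hjeq
            rw [dif_neg (by omega), dif_pos (by omega), dif_neg (by omega),
              dif_pos (show 1 ≤ m + 1 ∧ m + 1 ≤ m + 1 by omega)]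
            rw [show m + 2 - (m + 1) = 1 by omega, pow_one,
              show m + 3 - 2 - (m + 1) = 0 by omega, pow_zero]
            ring
      rw [stmt1Psi]
      calc ∑ i : Fin (m + 2), (X 0 : MvPolynomial (Fin 2) K) ^ (m + 3 - 2 - (i : ℕ)) *
              (X 1) ^ (i : ℕ) * stmt1K K (m + 3) w i
          = ∑ i : Fin (m + 2), (F ((i : ℕ) + 1) - F (i : ℕ)) :=
            Finset.sum_congr rfl fun i _ => hterm i
        _ = ∑ i ∈ Finset.range (m + 2), (F (i + 1) - F i) :=
            Fin.sum_univ_eq_sum_range (fun i => F (i + 1) - F i) (m + 2)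
        _ = F (m + 2) - F 0 := Finset.sum_range_sub F (m + 2)
        _ = 0 := by rw [hF]; simp
end

section
/- Let K be an algebraically closed field, n ≥ 3, and let F = Σ_{i=1}^{n-1} λ_i Q_{i,i+1} with λ_1 = λ_{n-1} = 1 and λ_i ∈ {0,1}, where Q_{i,j} = x_i x_{j-1} − x_{i-1} x_j. Then the quadric hypersurface V(F) ⊂ ℙ^n is smooth at every point of the rational normal curve C = {(s^n : s^{n-1}t : ⋯ : t^n)}: for every (s,t) ≠ (0,0), the gradient of F at the point (s^n, s^{n-1}t, …, t^n) is nonzero. -/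
open MvPolynomial

open Fin.NatCast in
/-- The quadric `F = Σ_{i=1}^{n-1} λ_i Q_{i,i+1}` with
`Q_{i,i+1} = x_i x_i − x_{i-1} x_{i+1}`. -/
noncomputable def stmt13F (K : Type*) [Field K] (n : ℕ) (l : ℕ → K) :
    MvPolynomial (Fin (n + 1)) K :=
  ∑ i ∈ Finset.Icc 1 (n - 1),
    C (l i) * (X (i : Fin (n + 1)) * X (i : Fin (n + 1))
      - X ((i - 1 : ℕ) : Fin (n + 1)) * X ((i + 1 : ℕ) : Fin (n + 1)))

open Fin.NatCast

lemma stmt13_key (K : Type*) [Field K] (n : ℕ) (l : ℕ → K) (P : Fin (n+1) → K)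
    (k : Fin (n+1)) :
    eval P (pderiv k (stmt13F K n l)) = ∑ i ∈ Finset.Icc 1 (n-1), l i *
      ((if k = (i : Fin (n+1)) then 2 * P i else 0)
       - ((if k = ((i-1 : ℕ) : Fin (n+1)) then P ((i+1 : ℕ) : Fin (n+1)) else 0)
         + (if k = ((i+1 : ℕ) : Fin (n+1)) then P ((i-1 : ℕ) : Fin (n+1)) else 0))) := by
  rw [stmt13F, map_sum, map_sum]
  refine Finset.sum_congr rfl fun i hi => ?_
  simp only [pderiv_mul, pderiv_C, pderiv_X, map_sub, map_add, map_mul, eval_C, eval_X,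
    Pi.single_apply, smul_eq_mul, zero_mul, mul_zero, add_zero, zero_add]
  simp only [apply_ite (eval P), map_one, map_zero]
  simp only [show ∀ a : Fin (n+1), (a = k) = (k = a) from fun a => propext eq_comm]
  split_ifs <;> ring

lemma stmt13_cast_iff {n a b : ℕ} (ha : a < n+1) (hb : b < n+1) :
    ((a : ℕ) : Fin (n+1)) = ((b : ℕ) : Fin (n+1)) ↔ a = b := by
  rw [Fin.ext_iff, Fin.val_cast_of_lt ha, Fin.val_cast_of_lt hb]

/-- with `λ_1 = λ_{n-1} = 1` and `λ_i ∈ {0,1}`, the quadric `V(F)`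
is smooth at every point of the rational normal curve `(s^n : s^{n-1}t : ⋯ : t^n)`. -/
theorem stmt_13 (K : Type*) [Field K] [IsAlgClosed K] (n : ℕ) (hn : 3 ≤ n)
    (l : ℕ → K) (h1 : l 1 = 1) (hlast : l (n - 1) = 1) (h01 : ∀ i, l i = 0 ∨ l i = 1)
    (s t : K) (hst : ¬(s = 0 ∧ t = 0)) :
    ∃ k : Fin (n + 1),
      eval (fun m : Fin (n + 1) => s ^ (n - (m : ℕ)) * t ^ (m : ℕ))
        (pderiv k (stmt13F K n l)) ≠ 0 := by
  have hv : ∀ a : ℕ, a < n + 1 → (((a : ℕ) : Fin (n+1)) : ℕ) = a :=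
    fun a ha => Fin.val_cast_of_lt ha
  by_cases ht : t = 0
  · -- t = 0, s ≠ 0, use k = 2, surviving term i = 1, value -s^n
    have hs : s ≠ 0 := fun h => hst ⟨h, ht⟩
    refine ⟨((2 : ℕ) : Fin (n+1)), ?_⟩
    rw [stmt13_key]
    rw [Finset.sum_eq_single 1 ?_ ?_]
    · rw [if_neg (by rw [stmt13_cast_iff (by omega) (by omega)]; omega),
        if_neg (by rw [stmt13_cast_iff (by omega) (by omega)]; omega),
        if_pos (by rw [stmt13_cast_iff (by omega) (by omega)])]
      simp only [hv (1-1) (by omega), h1]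
      simp [hs, pow_ne_zero]
    · intro i hi hne
      simp only [Finset.mem_Icc] at hi
      have hz : ∀ a : ℕ, 1 ≤ a → a < n + 1 →
          s ^ (n - (((a : ℕ) : Fin (n+1)) : ℕ)) * t ^ (((a : ℕ) : Fin (n+1)) : ℕ) = 0 := by
        intro a h1a h2a
        rw [hv a h2a, ht, zero_pow (by omega), mul_zero]
      rw [hz i (by omega) (by omega), hz (i+1) (by omega) (by omega),
        hz (i-1) (by omega) (by omega)]
      simp
    · intro h
      exact absurd (Finset.mem_Icc.mpr ⟨le_refl 1, by omega⟩) h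
  · by_cases hs : s = 0
    · -- s = 0, t ≠ 0, use k = n-2, surviving term i = n-1, value -t^n
      refine ⟨((n - 2 : ℕ) : Fin (n+1)), ?_⟩
      rw [stmt13_key]
      rw [Finset.sum_eq_single (n-1) ?_ ?_]
      · rw [if_neg (by rw [stmt13_cast_iff (by omega) (by omega)]; omega),
          if_pos (by rw [stmt13_cast_iff (by omega) (by omega)]; omega),
          if_neg (by rw [stmt13_cast_iff (by omega) (by omega)]; omega)]
        have : n - 1 + 1 = n := by omega
        rw [this, hv n (by omega), hlast]
        simp [ht, Nat.sub_self, pow_ne_zero]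
      · intro i hi hne
        simp only [Finset.mem_Icc] at hi
        have hz : ∀ a : ℕ, a < n → a < n + 1 →
            s ^ (n - (((a : ℕ) : Fin (n+1)) : ℕ)) * t ^ (((a : ℕ) : Fin (n+1)) : ℕ) = 0 := by
          intro a h1a h2a
          rw [hv a h2a, hs, zero_pow (by omega), zero_mul]
        rw [hz i (by omega) (by omega), hz (i+1) (by omega) (by omega),
          hz (i-1) (by omega) (by omega)]
        simp
      · intro h
        exact absurd (Finset.mem_Icc.mpr ⟨by omega, le_refl _⟩) h
    · -- s ≠ 0, t ≠ 0, use k = 0, surviving term i = 1, value -s^(n-2) t^2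
      refine ⟨((0 : ℕ) : Fin (n+1)), ?_⟩
      rw [stmt13_key]
      rw [Finset.sum_eq_single 1 ?_ ?_]
      · rw [if_neg (by rw [stmt13_cast_iff (by omega) (by omega)]; omega),
          if_pos (by rw [stmt13_cast_iff (by omega) (by omega)]),
          if_neg (by rw [stmt13_cast_iff (by omega) (by omega)]; omega)]
        rw [hv (1+1) (by omega), h1]
        simp [hs, ht, pow_ne_zero]
      · intro i hi hne
        simp only [Finset.mem_Icc] at hi
        rw [if_neg (by rw [stmt13_cast_iff (by omega) (by omega)]; omega),
          if_neg (by rw [stmt13_cast_iff (by omega) (by omega)]; omega),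
          if_neg (by rw [stmt13_cast_iff (by omega) (by omega)]; omega)]
        simp
      · intro h
        exact absurd (Finset.mem_Icc.mpr ⟨le_refl 1, by omega⟩) h
end

section
/- Let K be an infinite field, Q a symmetric p×p matrix and A a p×q matrix over K. Then there exists an invertible symmetric q×q matrix L such that rank(Q − A L^{-1} Aᵀ) ≥ rank(Q). Consequently, the symmetric block matrix M = [[Q, A],[Aᵀ, L]] satisfies rank(M) ≥ rank(Q) + q, i.e., corank(M) ≤ corank(Q). -/
open Matrix

section Aux

variable {K : Type*} [Field K]

/-- For any square matrix `M` of rank `r`, there are matrices `E, F` with `E * M * F = 1`. -/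
private lemma exists_EF {p : ℕ} (M : Matrix (Fin p) (Fin p) K) :
    ∃ (E : Matrix (Fin M.rank) (Fin p) K) (F : Matrix (Fin p) (Fin M.rank) K),
      E * M * F = 1 := by
  classical
  have hfr : Module.finrank K (LinearMap.range M.mulVecLin) = M.rank := rfl
  let w : Module.Basis (Fin M.rank) K (LinearMap.range M.mulVecLin) :=
    Module.finBasisOfFinrankEq K _ hfr
  have hv : ∀ i : Fin M.rank, ∃ y, M.mulVecLin y = (w i : Fin p → K) := fun i =>
    LinearMap.mem_range.mp (w i).2
  choose v hvv using hv
  set F : Matrix (Fin p) (Fin M.rank) K := Matrix.of fun i j => v j i with hF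
  have hw : LinearIndependent K (fun i => (w i : Fin p → K)) :=
    w.linearIndependent.map' (Submodule.subtype _) (Submodule.ker_subtype _)
  have hcol : ∀ x : Fin M.rank → K,
      (M * F) *ᵥ x = ∑ j, x j • (w j : Fin p → K) := by
    intro x
    funext i
    have h1 : ((M * F) *ᵥ x) i = ∑ j, (M * F) i j * x j := rfl
    have h2 : ∀ j, (M * F) i j = (w j : Fin p → K) i := by
      intro j
      have : (M * F) i j = (M *ᵥ v j) i := by
        simp [Matrix.mul_apply, Matrix.mulVec, dotProduct, hF]
      rw [this, ← hvv j]; rfl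
    rw [h1]
    simp only [h2, Finset.sum_apply, Pi.smul_apply, smul_eq_mul]
    exact Finset.sum_congr rfl fun j _ => mul_comm _ _
  have hinj : LinearMap.ker (M * F).mulVecLin = ⊥ := by
    rw [LinearMap.ker_eq_bot]
    intro x y hxy
    have hx := Fintype.linearIndependent_iff.mp hw
    suffices h : ∀ z : Fin M.rank → K, (M * F).mulVecLin z = 0 → z = 0 by
      have : (M * F).mulVecLin (x - y) = 0 := by
        rw [map_sub, hxy, sub_self]
      have := h _ this
      exact sub_eq_zero.mp this
    intro z hz
    have : ∑ j, z j • (w j : Fin p → K) = 0 := by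
      rw [← hcol z]; exact hz
    funext j
    exact hx z this j
  obtain ⟨g, hg⟩ := (M * F).mulVecLin.exists_leftInverse_of_injective hinj
  refine ⟨LinearMap.toMatrix' g, F, ?_⟩
  have : LinearMap.toMatrix' g * (M * F) = 1 := by
    have h1 : (M * F) = LinearMap.toMatrix' ((M * F).mulVecLin) := by
      rw [show (M * F).mulVecLin = Matrix.toLin' (M * F) from rfl,
        LinearMap.toMatrix'_toLin']
    rw [h1, ← LinearMap.toMatrix'_comp, hg, LinearMap.toMatrix'_id]
  rw [Matrix.mul_assoc]
  exact this

/-- Semicontinuity of rank: for infinitely many `t` (in particular some `t ≠ 0`),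
`rank (Q - t • B) ≥ rank Q`. -/
private lemma exists_t [Infinite K] {p : ℕ} (Q B : Matrix (Fin p) (Fin p) K) :
    ∃ t : K, t ≠ 0 ∧ Q.rank ≤ (Q - t • B).rank := by
  classical
  obtain ⟨E, F, hEF⟩ := exists_EF Q
  -- the polynomial `det (E(Q - XB)F)`
  let N : Matrix (Fin Q.rank) (Fin Q.rank) (Polynomial K) :=
    ((E * Q * F).map Polynomial.C) - (Polynomial.X : Polynomial K) • ((E * B * F).map Polynomial.C)
  set φ : Polynomial K := N.det with hφdef
  have hmap : ∀ t : K, N.map (Polynomial.eval t) = E * Q * F - t • (E * B * F) := by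
    intro t
    ext i j
    simp only [N, Matrix.sub_apply, Matrix.smul_apply, Matrix.map_apply, smul_eq_mul,
      Polynomial.eval_sub, Polynomial.eval_mul, Polynomial.eval_X, Polynomial.eval_C]
  have heval : ∀ t : K, φ.eval t = (E * Q * F - t • (E * B * F)).det := by
    intro t
    have h := RingHom.map_det (Polynomial.evalRingHom t) N
    rw [RingHom.mapMatrix_apply] at h
    have h2 : N.map ⇑(Polynomial.evalRingHom t) = E * Q * F - t • (E * B * F) := by
      rw [Polynomial.coe_evalRingHom]; exact hmap t
    rw [h2] at h
    exact h
  have hφ0 : φ.eval 0 = 1 := by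
    rw [heval 0, zero_smul, sub_zero, hEF, Matrix.det_one]
  have hφ : φ ≠ 0 := fun h => by simp [h] at hφ0
  have hfin : ({x | φ.IsRoot x} ∪ {0}).Finite := by
    refine Set.Finite.union ?_ (Set.finite_singleton 0)
    by_contra h
    exact hφ (Polynomial.eq_zero_of_infinite_isRoot φ h)
  obtain ⟨t, ht⟩ := (hfin.infinite_compl).nonempty
  simp only [Set.mem_compl_iff, Set.mem_union, Set.mem_setOf_eq, Set.mem_singleton_iff,
    not_or] at ht
  obtain ⟨htroot, ht0⟩ := ht
  refine ⟨t, ht0, ?_⟩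
  have hdet : (E * (Q - t • B) * F).det ≠ 0 := by
    have hEQ : E * (Q - t • B) * F = E * Q * F - t • (E * B * F) := by
      rw [Matrix.mul_sub, Matrix.sub_mul, Matrix.mul_smul, Matrix.smul_mul]
    rw [hEQ, ← heval t]
    exact htroot
  have hrk : (E * (Q - t • B) * F).rank = Q.rank := by
    have : IsUnit (E * (Q - t • B) * F) :=
      (Matrix.isUnit_iff_isUnit_det _).mpr (isUnit_iff_ne_zero.mpr hdet)
    rw [Matrix.rank_of_isUnit _ this, Fintype.card_fin]
  calc Q.rank = (E * (Q - t • B) * F).rank := hrk.symm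
    _ ≤ (E * (Q - t • B)).rank := Matrix.rank_mul_le_left _ _
    _ ≤ (Q - t • B).rank := Matrix.rank_mul_le_right _ _

/-- Rank of a block diagonal matrix with invertible second block. -/
private lemma blockdiag_rank_ge {p q : ℕ} (S : Matrix (Fin p) (Fin p) K)
    (L : Matrix (Fin q) (Fin q) K) (hL : IsUnit L.det) :
    S.rank + q ≤ (Matrix.fromBlocks S 0 0 L).rank := by
  classical
  set D : Matrix (Fin p ⊕ Fin q) (Fin p ⊕ Fin q) K := Matrix.fromBlocks S 0 0 L with hD
  have hkerle : Module.finrank K (LinearMap.ker D.mulVecLin) ≤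
      Module.finrank K (LinearMap.ker S.mulVecLin) := by
    -- the map `v ↦ v ∘ Sum.inl` restricts to an injection of kernels
    have hmem : ∀ v ∈ LinearMap.ker D.mulVecLin,
        (LinearMap.funLeft K K (Sum.inl : Fin p → Fin p ⊕ Fin q)) v ∈
          LinearMap.ker S.mulVecLin := by
      intro v hv
      rw [LinearMap.mem_ker] at hv ⊢
      have := congrArg (fun f => f ∘ Sum.inl) (show D *ᵥ v = 0 from hv)
      rw [hD, Matrix.fromBlocks_mulVec] at this
      funext i
      exact (by simpa using congrFun this i : (S *ᵥ v ∘ Sum.inl) i = 0)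
    have hinr : ∀ v ∈ LinearMap.ker D.mulVecLin, v ∘ Sum.inr = 0 := by
      intro v hv
      rw [LinearMap.mem_ker] at hv
      have := congrArg (fun f => f ∘ Sum.inr) (show D *ᵥ v = 0 from hv)
      rw [hD, Matrix.fromBlocks_mulVec] at this
      have hLv : L *ᵥ (v ∘ Sum.inr) = 0 := by
        funext i
        simpa using congrFun this i
      have : L⁻¹ *ᵥ (L *ᵥ (v ∘ Sum.inr)) = 0 := by rw [hLv, Matrix.mulVec_zero]
      rwa [Matrix.mulVec_mulVec, Matrix.nonsing_inv_mul _ hL, Matrix.one_mulVec] at this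
    let ψ : LinearMap.ker D.mulVecLin →ₗ[K] LinearMap.ker S.mulVecLin :=
      (LinearMap.funLeft K K Sum.inl).restrict hmem
    have hψ : Function.Injective ψ := by
      intro x y hxy
      ext1
      have h1 : (x : Fin p ⊕ Fin q → K) ∘ Sum.inl = (y : Fin p ⊕ Fin q → K) ∘ Sum.inl := by
        have := congrArg Subtype.val hxy
        exact this
      have h2 := hinr _ x.2
      have h3 := hinr _ y.2
      funext i
      cases i with
      | inl i => exact congrFun h1 i
      | inr i =>
          have := congrFun h2 i
          have h3' := congrFun h3 i
          simp only [Function.comp_apply, Pi.zero_apply] at this h3'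
          rw [this, h3']
    exact LinearMap.finrank_le_finrank_of_injective hψ
  have h1 : D.rank + Module.finrank K (LinearMap.ker D.mulVecLin) = p + q := by
    have := LinearMap.finrank_range_add_finrank_ker D.mulVecLin
    rw [Module.finrank_fintype_fun_eq_card, Fintype.card_sum, Fintype.card_fin,
      Fintype.card_fin] at this
    exact this
  have h2 : S.rank + Module.finrank K (LinearMap.ker S.mulVecLin) = p := by
    have := LinearMap.finrank_range_add_finrank_ker S.mulVecLin
    rw [Module.finrank_fintype_fun_eq_card, Fintype.card_fin] at this
    exact this
  have h3 : S.rank ≤ p := Matrix.rank_le_width S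
  omega

end Aux

/-- over an infinite field, for symmetric `Q` and any `A`, there is an
invertible symmetric `L` with `rank(Q − A L⁻¹ Aᵀ) ≥ rank Q`; consequently the block
matrix `[[Q, A], [Aᵀ, L]]` has rank at least `rank Q + q`, i.e. corank at most
`corank Q`. -/
theorem stmt_17 (K : Type*) [Field K] [Infinite K] (p q : ℕ)
    (Q : Matrix (Fin p) (Fin p) K) (A : Matrix (Fin p) (Fin q) K) (hQ : Q.IsSymm) :
    ∃ L : Matrix (Fin q) (Fin q) K, L.IsSymm ∧ IsUnit L.det ∧
      Q.rank ≤ (Q - A * L⁻¹ * Aᵀ).rank ∧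
      Q.rank + q ≤ (Matrix.fromBlocks Q A Aᵀ L).rank := by
  classical
  obtain ⟨t, ht0, ht⟩ := exists_t Q (A * Aᵀ)
  set L : Matrix (Fin q) (Fin q) K := t⁻¹ • (1 : Matrix (Fin q) (Fin q) K) with hLdef
  have hL1 : L * (t • (1 : Matrix (Fin q) (Fin q) K)) = 1 := by
    rw [hLdef, Matrix.smul_mul, Matrix.mul_smul, Matrix.mul_one, smul_smul,
      inv_mul_cancel₀ ht0, one_smul]
  have hLinv : L⁻¹ = t • (1 : Matrix (Fin q) (Fin q) K) := Matrix.inv_eq_right_inv hL1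
  have hLdet : IsUnit L.det := by
    rw [hLdef, Matrix.det_smul, Matrix.det_one, mul_one]
    exact isUnit_iff_ne_zero.mpr (pow_ne_zero _ (inv_ne_zero ht0))
  have hLsymm : L.IsSymm := by
    rw [Matrix.IsSymm, hLdef, Matrix.transpose_smul, Matrix.transpose_one]
  have hS : Q - A * L⁻¹ * Aᵀ = Q - t • (A * Aᵀ) := by
    rw [hLinv, Matrix.mul_smul, Matrix.mul_one, Matrix.smul_mul]
  refine ⟨L, hLsymm, hLdet, ?_, ?_⟩
  · rw [hS]; exact ht
  · -- block matrix rank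
    haveI : Invertible L := L.invertibleOfIsUnitDet hLdet
    have hdecomp := Matrix.fromBlocks_eq_of_invertible₂₂ Q A Aᵀ L
    set S : Matrix (Fin p) (Fin p) K := Q - A * ⅟L * Aᵀ with hSdef
    set U : Matrix (Fin p ⊕ Fin q) (Fin p ⊕ Fin q) K :=
      Matrix.fromBlocks 1 (A * ⅟L) 0 1 with hU
    set V : Matrix (Fin p ⊕ Fin q) (Fin p ⊕ Fin q) K :=
      Matrix.fromBlocks 1 0 (⅟L * Aᵀ) 1 with hV
    have hUdet : IsUnit U.det := by
      rw [hU, Matrix.det_fromBlocks_zero₂₁, Matrix.det_one, Matrix.det_one, mul_one]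
      exact isUnit_one
    have hVdet : IsUnit V.det := by
      rw [hV, Matrix.det_fromBlocks_zero₁₂, Matrix.det_one, Matrix.det_one, mul_one]
      exact isUnit_one
    have hrank : (Matrix.fromBlocks Q A Aᵀ L).rank = (Matrix.fromBlocks S 0 0 L).rank := by
      rw [hdecomp]
      rw [show U * Matrix.fromBlocks S 0 0 L * V = U * (Matrix.fromBlocks S 0 0 L * V) from
        Matrix.mul_assoc _ _ _]
      rw [Matrix.rank_mul_eq_right_of_isUnit_det U _ hUdet,
        Matrix.rank_mul_eq_left_of_isUnit_det V _ hVdet]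
    rw [hrank]
    have hQS : Q.rank ≤ S.rank := by
      have : S = Q - A * L⁻¹ * Aᵀ := by rw [hSdef, Matrix.invOf_eq_nonsing_inv]
      rw [this, hS]
      exact ht
    calc Q.rank + q ≤ S.rank + q := by omega
      _ ≤ (Matrix.fromBlocks S 0 0 L).rank := blockdiag_rank_ge S L hLdet
end
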